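/- Entropy of softmax under score gap: let s_1, …, s_n be scores with s_1 − s_j ≥ δ > 0 for all j ≥ 2, and let α = softmax(s/T) with T > 0. Then the Shannon entropy of α satisfies H(α) ≤ H(C/(C+n−1)) + (1 − C/(C+n−1))·log(n−1), where C = exp(δ/T) and H(p) is the binary entropy; equivalently H(α) ≤ log(C + n − 1) − (C/(C+n−1)) log C. -/

import Mathlib

/-- If `s_1 - s_j ≥ δ > 0` for all `j ≥ 2` and
`α = softmax(s/T)` with `T > 0`, then with `C = exp(δ/T)` the Shannon entropy
of `α` satisfies `H(α) ≤ log(C + n - 1) - (C/(C+n-1)) log C`. -/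
theorem softmax_entropy_bound (n : ℕ) (hn : 2 ≤ n) (s : Fin n → ℝ)
    (δ T : ℝ) (hδ : 0 < δ) (hT : 0 < T)
    (hgap : ∀ j : Fin n, j ≠ ⟨0, by omega⟩ → δ ≤ s ⟨0, by omega⟩ - s j)
    (α : Fin n → ℝ)
    (hα : ∀ i, α i = Real.exp (s i / T) / ∑ j, Real.exp (s j / T)) :
    -∑ i, α i * Real.log (α i)
      ≤ Real.log (Real.exp (δ / T) + (n : ℝ) - 1)
        - (Real.exp (δ / T) / (Real.exp (δ / T) + (n : ℝ) - 1))
          * Real.log (Real.exp (δ / T)) := by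
  set C : ℝ := Real.exp (δ / T) with hCdef
  have hC1 : 1 < C := by
    rw [hCdef, ← Real.exp_zero]
    exact Real.exp_lt_exp.mpr (by positivity)
  have hn' : (2:ℝ) ≤ (n:ℝ) := by exact_mod_cast hn
  set D : ℝ := C + (n:ℝ) - 1 with hDdef
  have hD2 : 2 < D := by simp only [hDdef]; linarith
  have hDpos : 0 < D := by linarith
  set i0 : Fin n := ⟨0, by omega⟩ with hi0
  have hZpos : 0 < ∑ j, Real.exp (s j / T) :=
    Finset.sum_pos (fun j _ => Real.exp_pos _) ⟨i0, Finset.mem_univ _⟩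
  have hαpos : ∀ i, 0 < α i := fun i => by rw [hα]; positivity
  have hαsum : ∑ i, α i = 1 := by
    simp only [hα]
    rw [← Finset.sum_div, div_self (ne_of_gt hZpos)]
  -- α j ≤ α i0 / C for j ≠ i0
  have hbound : ∀ j, j ≠ i0 → α j ≤ α i0 / C := by
    intro j hj
    have key : Real.exp (s j / T) * C ≤ Real.exp (s i0 / T) := by
      rw [hCdef, ← Real.exp_add]
      apply Real.exp_le_exp.mpr
      have hg := hgap j hj
      rw [← add_div]
      gcongr
      linarith
    rw [hα, hα, div_div]
    rw [div_le_div_iff₀ hZpos (by positivity)]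
    nlinarith [hZpos, Real.exp_pos (s j / T)]
  -- sum over the erase set
  have hcard : (Finset.univ.erase i0).card = n - 1 := by
    rw [Finset.card_erase_of_mem (Finset.mem_univ _), Finset.card_univ, Fintype.card_fin]
  have hsplit : α i0 + ∑ j ∈ Finset.univ.erase i0, α j = 1 := by
    rw [← hαsum, Finset.add_sum_erase _ _ (Finset.mem_univ i0)]
  have herase_le : ∑ j ∈ Finset.univ.erase i0, α j ≤ ((n:ℝ) - 1) * (α i0 / C) := by
    calc ∑ j ∈ Finset.univ.erase i0, α j
        ≤ ∑ _j ∈ Finset.univ.erase i0, (α i0 / C) :=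
          Finset.sum_le_sum (fun j hj => hbound j (Finset.ne_of_mem_erase hj))
      _ = ((n:ℝ) - 1) * (α i0 / C) := by
          rw [Finset.sum_const, hcard, nsmul_eq_mul, Nat.cast_sub (by omega), Nat.cast_one]
  have hα0 : C / D ≤ α i0 := by
    have h1 : 1 ≤ α i0 + ((n:ℝ) - 1) * (α i0 / C) := by linarith
    have hCpos : (0:ℝ) < C := by linarith
    rw [div_le_iff₀ hDpos]
    have := hαpos i0
    rw [div_eq_mul_inv] at h1
    have h2 : 1 ≤ α i0 * (1 + ((n:ℝ)-1) * C⁻¹) := by ring_nf; ring_nf at h1; linarith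
    have h3 : C * (1 + ((n:ℝ)-1) * C⁻¹) = D := by field_simp [hDdef]; ring
    nlinarith [h2, h3, mul_pos this hCpos]
  -- the comparison distribution β
  set β : Fin n → ℝ := fun i => if i = i0 then C / D else 1 / D with hβdef
  have hβpos : ∀ i, 0 < β i := by
    intro i; simp only [hβdef]; split <;> positivity
  have hβsum : ∑ i, β i = 1 := by
    rw [← Finset.add_sum_erase _ _ (Finset.mem_univ i0)]
    simp only [hβdef, if_pos rfl]
    rw [Finset.sum_ite_of_false (by intro j hj; exact Finset.ne_of_mem_erase hj)]
    rw [Finset.sum_const, hcard, nsmul_eq_mul, Nat.cast_sub (by omega), Nat.cast_one]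
    field_simp [hDdef]
    ring
  -- Gibbs' inequality
  have gibbs : -∑ i, α i * Real.log (α i) ≤ -∑ i, α i * Real.log (β i) := by
    have key : ∑ i, α i * (Real.log (β i) - Real.log (α i)) ≤ 0 := by
      calc ∑ i, α i * (Real.log (β i) - Real.log (α i))
          = ∑ i, α i * Real.log (β i / α i) := by
            apply Finset.sum_congr rfl
            intro i _
            rw [Real.log_div (ne_of_gt (hβpos i)) (ne_of_gt (hαpos i))]
        _ ≤ ∑ i, α i * (β i / α i - 1) := by
            apply Finset.sum_le_sum
            intro i _
            exact mul_le_mul_of_nonneg_left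
              (Real.log_le_sub_one_of_pos (div_pos (hβpos i) (hαpos i))) (le_of_lt (hαpos i))
        _ = ∑ i, (β i - α i) := by
            apply Finset.sum_congr rfl
            intro i _
            have h := (hαpos i).ne'
            field_simp
        _ = 0 := by rw [Finset.sum_sub_distrib, hβsum, hαsum]; ring
    have : ∑ i, α i * Real.log (β i) - ∑ i, α i * Real.log (α i) ≤ 0 := by
      rw [← Finset.sum_sub_distrib]
      calc _ = ∑ i, α i * (Real.log (β i) - Real.log (α i)) := by
              apply Finset.sum_congr rfl; intro i _; ring
        _ ≤ 0 := key
    linarith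
  -- compute the cross entropy
  have hcross : -∑ i, α i * Real.log (β i) = Real.log D - α i0 * Real.log C := by
    rw [← Finset.add_sum_erase _ _ (Finset.mem_univ i0)]
    simp only [hβdef, if_pos rfl]
    rw [Finset.sum_congr rfl (fun j hj => by
      rw [if_neg (Finset.ne_of_mem_erase hj)])]
    rw [← Finset.sum_mul]
    have hsum' : ∑ j ∈ Finset.univ.erase i0, α j = 1 - α i0 := by linarith
    rw [hsum']
    rw [Real.log_div (by linarith) (ne_of_gt hDpos), Real.log_div one_ne_zero (ne_of_gt hDpos),
      Real.log_one]
    ring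
  have hlogC : 0 < Real.log C := Real.log_pos hC1
  calc -∑ i, α i * Real.log (α i)
      ≤ Real.log D - α i0 * Real.log C := by rw [← hcross]; exact gibbs
    _ ≤ Real.log D - (C / D) * Real.log C := by nlinarith [hα0, hlogC]
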